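/- Let d ≥ 2 and δ ∈ (1/d, 2/d]. There exists C > 0 depending only on d and δ such that for every g ∈ L¹(ℝ^d) and all x, y ∈ ℝ^d with 0 < R := |x−y| ≤ 1/9, letting A = (x+y)/2, one has ∫_{ℝ^d ∖ B(A, |ln R|^{−δ})} |K(x−z) − K(y−z)| |g(z)| dz ≤ C ‖g‖_{L¹} R |ln R|^{dδ}. -/

import Mathlib

open MeasureTheory Real
open scoped ENNReal NNReal Classical

/-- The Newton/Coulomb kernel `K(x) = γ x / |x|^d` (with `K(0) = 0`). -/
noncomputable def Kker (d : ℕ) (sgn : ℝ) (x : EuclideanSpace ℝ (Fin d)) :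
    EuclideanSpace ℝ (Fin d) :=
  if x = 0 then 0 else (sgn / ‖x‖ ^ d) • x

lemma pow_lip (a b : ℝ) (ha : 0 ≤ a) (hab : a ≤ b) :
    ∀ k : ℕ, b ^ (k + 1) - a ^ (k + 1) ≤ ((k : ℝ) + 1) * b ^ k * (b - a)
  | 0 => by simp
  | (k + 1) => by
    have ih := pow_lip a b ha hab k
    have hb : 0 ≤ b := ha.trans hab
    have hpow : a ^ (k + 1) ≤ b ^ (k + 1) := pow_le_pow_left₀ ha hab _
    have hid : b ^ (k + 2) - a ^ (k + 2)
        = b * (b ^ (k + 1) - a ^ (k + 1)) + a ^ (k + 1) * (b - a) := by ring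
    have h1 : b * (b ^ (k + 1) - a ^ (k + 1)) ≤ b * (((k : ℝ) + 1) * b ^ k * (b - a)) :=
      mul_le_mul_of_nonneg_left ih hb
    have h2 : a ^ (k + 1) * (b - a) ≤ b ^ (k + 1) * (b - a) :=
      mul_le_mul_of_nonneg_right hpow (by linarith)
    have hbk : b * (((k : ℝ) + 1) * b ^ k * (b - a)) = ((k : ℝ) + 1) * b ^ (k + 1) * (b - a) := by
      ring
    push_cast
    nlinarith [pow_nonneg hb (k + 1)]

lemma div_le_div_of_nonneg_right' {a b c : ℝ} (h : a ≤ b) (hc : 0 < c) :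
    a / c ≤ b / c := by
  gcongr

lemma kdiff_aux {E : Type*} [NormedAddCommGroup E] [NormedSpace ℝ E]
    (k : ℕ) (u v : E) (hu : u ≠ 0) (hab : ‖u‖ ≤ ‖v‖) :
    ‖(‖u‖ ^ (k + 1))⁻¹ • u - (‖v‖ ^ (k + 1))⁻¹ • v‖
      ≤ ((k : ℝ) + 2) * ‖u - v‖ / ‖u‖ ^ (k + 1) := by
  set a := ‖u‖ with ha_def
  set b := ‖v‖ with hb_def
  have ha : 0 < a := norm_pos_iff.mpr hu
  have hb : 0 < b := lt_of_lt_of_le ha hab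
  set t := ‖u - v‖ with ht_def
  have ht : 0 ≤ t := norm_nonneg _
  have hba : b - a ≤ t := by
    have h := norm_sub_norm_le v u
    rw [norm_sub_rev] at h
    linarith [h]
  have key : b ^ (k + 1) - a ^ (k + 1) ≤ ((k : ℝ) + 1) * b ^ k * (b - a) :=
    pow_lip a b ha.le hab k
  have hA1 : (0:ℝ) < a ^ (k + 1) := pow_pos ha _
  have hB1 : (0:ℝ) < b ^ (k + 1) := pow_pos hb _
  have hBk : (0:ℝ) < b ^ k := pow_pos hb _
  have hid : (a ^ (k + 1))⁻¹ • u - (b ^ (k + 1))⁻¹ • v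
      = (a ^ (k + 1))⁻¹ • (u - v) + ((a ^ (k + 1))⁻¹ - (b ^ (k + 1))⁻¹) • v := by
    rw [smul_sub, sub_smul]; abel
  rw [hid]
  refine (norm_add_le _ _).trans ?_
  rw [norm_smul, norm_smul, Real.norm_eq_abs, Real.norm_eq_abs,
    abs_of_pos (inv_pos.mpr hA1)]
  have hinvle : (b ^ (k + 1))⁻¹ ≤ (a ^ (k + 1))⁻¹ := by
    apply inv_anti₀ hA1
    exact pow_le_pow_left₀ ha.le hab _
  rw [abs_of_nonneg (by linarith : (0:ℝ) ≤ (a ^ (k + 1))⁻¹ - (b ^ (k + 1))⁻¹)]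
  -- second term bound
  have h2 : ((a ^ (k + 1))⁻¹ - (b ^ (k + 1))⁻¹) * b ≤ ((k : ℝ) + 1) * t / a ^ (k + 1) := by
    have e1 : ((a ^ (k + 1))⁻¹ - (b ^ (k + 1))⁻¹) * b
        = (b ^ (k + 1) - a ^ (k + 1)) / (a ^ (k + 1) * b ^ k) := by
      rw [pow_succ b k]
      field_simp
    rw [e1]
    have hnum : b ^ (k + 1) - a ^ (k + 1) ≤ ((k : ℝ) + 1) * b ^ k * t := by
      calc b ^ (k + 1) - a ^ (k + 1) ≤ ((k : ℝ) + 1) * b ^ k * (b - a) := key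
        _ ≤ ((k : ℝ) + 1) * b ^ k * t := by
            apply mul_le_mul_of_nonneg_left hba
            positivity
    calc (b ^ (k + 1) - a ^ (k + 1)) / (a ^ (k + 1) * b ^ k)
        ≤ (((k : ℝ) + 1) * b ^ k * t) / (a ^ (k + 1) * b ^ k) := by
          exact div_le_div_of_nonneg_right' hnum (by positivity)
      _ = ((k : ℝ) + 1) * t / a ^ (k + 1) := by
          field_simp
  have h3 : (a ^ (k + 1))⁻¹ * t + ((a ^ (k + 1))⁻¹ - (b ^ (k + 1))⁻¹) * b
      ≤ ((k : ℝ) + 2) * t / a ^ (k + 1) := by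
    have : (a ^ (k + 1))⁻¹ * t = t / a ^ (k + 1) := by ring
    rw [this]
    have : ((k : ℝ) + 2) * t / a ^ (k + 1)
        = t / a ^ (k + 1) + ((k : ℝ) + 1) * t / a ^ (k + 1) := by ring
    rw [this]
    linarith
  exact h3

lemma kdiff (d : ℕ) (hd : 1 ≤ d) (sgn : ℝ) (hsgn : sgn = 1 ∨ sgn = -1)
    (u v : EuclideanSpace ℝ (Fin d)) (hu : u ≠ 0) (hv : v ≠ 0)
    {m : ℝ} (hm : 0 < m) (hmu : m ≤ ‖u‖) (hmv : m ≤ ‖v‖) :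
    ‖Kker d sgn u - Kker d sgn v‖ ≤ ((d:ℝ) + 1) * ‖u - v‖ / m ^ d := by
  obtain ⟨k, rfl⟩ : ∃ k, d = k + 1 :=
    Nat.exists_eq_succ_of_ne_zero (by omega)
  have habs : |sgn| = 1 := by rcases hsgn with h | h <;> simp [h]
  have hKu : Kker (k + 1) sgn u = sgn • ((‖u‖ ^ (k + 1))⁻¹ • u) := by
    rw [Kker, if_neg hu, div_eq_mul_inv, mul_smul]
  have hKv : Kker (k + 1) sgn v = sgn • ((‖v‖ ^ (k + 1))⁻¹ • v) := by
    rw [Kker, if_neg hv, div_eq_mul_inv, mul_smul]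
  rw [hKu, hKv, ← smul_sub, norm_smul, Real.norm_eq_abs, habs, one_mul]
  have hcast : ((k:ℝ) + 1 + 1) = (k:ℝ) + 2 := by ring
  have hmd : (0:ℝ) < m ^ (k + 1) := pow_pos hm _
  rcases le_total ‖u‖ ‖v‖ with hab | hab
  · have h := kdiff_aux k u v hu hab
    refine h.trans ?_
    push_cast
    rw [hcast]
    gcongr
  · have h := kdiff_aux k v u hv hab
    rw [norm_sub_rev ((‖v‖ ^ (k + 1))⁻¹ • v), norm_sub_rev v u] at h
    refine h.trans ?_
    push_cast
    rw [hcast]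
    gcongr

theorem stmt1 (d : ℕ) (hd : 2 ≤ d) (sgn : ℝ) (hsgn : sgn = 1 ∨ sgn = -1)
    (δ : ℝ) (hδ1 : 1 / (d : ℝ) < δ) (hδ2 : δ ≤ 2 / (d : ℝ)) :
    ∃ C : ℝ, 0 < C ∧
      ∀ g : EuclideanSpace ℝ (Fin d) → ℝ, Integrable g →
        ∀ x y : EuclideanSpace ℝ (Fin d), x ≠ y → ‖x - y‖ ≤ 1 / 9 →
          ∫⁻ z in (Metric.ball ((2 : ℝ)⁻¹ • (x + y)) (|Real.log ‖x - y‖| ^ (-δ)))ᶜ,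
              (‖Kker d sgn (x - z) - Kker d sgn (y - z)‖₊ : ℝ≥0∞) * ENNReal.ofReal |g z|
            ≤ ENNReal.ofReal
                (C * (∫ z, |g z|) * ‖x - y‖ * |Real.log ‖x - y‖| ^ ((d : ℝ) * δ)) := by
  have hd0 : (0:ℝ) < d := by positivity
  have hd0' : (2:ℝ) ≤ d := by exact_mod_cast hd
  refine ⟨((d : ℝ) + 1) * 2 ^ d, by positivity, ?_⟩
  intro g hg x y hxy hR9
  set R := ‖x - y‖ with hR_def
  have hR0 : 0 < R := norm_pos_iff.mpr (sub_ne_zero.mpr hxy)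
  set L := |Real.log R| with hL_def
  have hlogneg : Real.log R < 0 := Real.log_neg hR0 (by linarith)
  have hL_eq : L = Real.log R⁻¹ := by
    rw [hL_def, Real.log_inv, abs_of_neg hlogneg]
  have hL0 : 0 < L := abs_pos.mpr (ne_of_lt hlogneg)
  have hL1 : 1 < L := by
    rw [hL_eq]
    rw [Real.lt_log_iff_exp_lt (by positivity)]
    have h9 : (9:ℝ) ≤ R⁻¹ := by
      rw [le_inv_comm₀ (by norm_num) hR0]
      linarith [hR9]
    calc Real.exp 1 < 2.7182818286 := Real.exp_one_lt_d9
      _ ≤ R⁻¹ := by linarith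
  have hRL : R * L ≤ 1 := by
    have := Real.log_le_sub_one_of_pos (inv_pos.mpr hR0)
    rw [← hL_eq] at this
    have h2 : R * L ≤ R * (R⁻¹ - 1) := mul_le_mul_of_nonneg_left this hR0.le
    have h3 : R * (R⁻¹ - 1) = 1 - R := by field_simp
    linarith
  have hδ0 : 0 < δ := lt_trans (by positivity) hδ1
  have hδle1 : δ ≤ 1 := by
    calc δ ≤ 2 / (d:ℝ) := hδ2
      _ ≤ 1 := by rw [div_le_one hd0]; linarith
  set ρ := L ^ (-δ) with hρ_def
  have hρ0 : 0 < ρ := Real.rpow_pos_of_pos hL0 _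
  set P := L ^ ((d:ℝ) * δ) with hP_def
  have hP0 : 0 < P := Real.rpow_pos_of_pos hL0 _
  have hρd : ρ ^ d = P⁻¹ := by
    rw [hρ_def, ← Real.rpow_natCast (L ^ (-δ)) d, ← Real.rpow_mul hL0.le,
      show (-δ) * (d:ℝ) = -((d:ℝ) * δ) by ring, Real.rpow_neg hL0.le, hP_def]
  have hRρ : R ≤ ρ := by
    have hLδ : L ^ δ ≤ L := by
      calc L ^ δ ≤ L ^ (1:ℝ) := Real.rpow_le_rpow_of_exponent_le hL1.le hδle1
        _ = L := Real.rpow_one L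
    have hLδ0 : 0 < L ^ δ := Real.rpow_pos_of_pos hL0 _
    have h1 : R * L ^ δ ≤ 1 := by
      calc R * L ^ δ ≤ R * L := mul_le_mul_of_nonneg_left hLδ hR0.le
        _ ≤ 1 := hRL
    have : ρ = (L ^ δ)⁻¹ := by rw [hρ_def, Real.rpow_neg hL0.le]
    rw [this, ← one_div]
    rw [le_div_iff₀ hLδ0]
    exact h1
  set A := (2:ℝ)⁻¹ • (x + y) with hA_def
  set M := (((d:ℝ) + 1) * 2 ^ d) * R * P with hM_def
  have hM0 : 0 ≤ M := by positivity
  -- pointwise bound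
  have hpt : ∀ z ∈ (Metric.ball A ρ)ᶜ,
      ‖Kker d sgn (x - z) - Kker d sgn (y - z)‖ ≤ M := by
    intro z hz
    have hzA : ρ ≤ dist z A := by
      simpa [Metric.mem_ball] using hz
    have hxA : dist x A = R / 2 := by
      have : x - A = (2:ℝ)⁻¹ • (x - y) := by rw [hA_def]; module
      rw [dist_eq_norm, this, norm_smul]
      simp [Real.norm_eq_abs, hR_def]
      ring
    have hyA : dist y A = R / 2 := by
      have : y - A = (2:ℝ)⁻¹ • (y - x) := by rw [hA_def]; module
      rw [dist_eq_norm, this, norm_smul, norm_sub_rev]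
      simp [Real.norm_eq_abs, hR_def]
      ring
    have hxz : ρ / 2 ≤ ‖x - z‖ := by
      have h1 : dist z A ≤ dist z x + dist x A := dist_triangle _ _ _
      have h2 : ‖x - z‖ = dist z x := by rw [dist_eq_norm, norm_sub_rev]
      rw [h2]; rw [hxA] at h1; linarith
    have hyz : ρ / 2 ≤ ‖y - z‖ := by
      have h1 : dist z A ≤ dist z y + dist y A := dist_triangle _ _ _
      have h2 : ‖y - z‖ = dist z y := by rw [dist_eq_norm, norm_sub_rev]
      rw [h2]; rw [hyA] at h1; linarith
    have hm0 : (0:ℝ) < ρ / 2 := by linarith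
    have hxz0 : x - z ≠ 0 := by
      intro h; rw [h] at hxz; simp at hxz; linarith
    have hyz0 : y - z ≠ 0 := by
      intro h; rw [h] at hyz; simp at hyz; linarith
    have hsub : (x - z) - (y - z) = x - y := by abel
    have hbd : ‖Kker d sgn (x - z) - Kker d sgn (y - z)‖
        ≤ ((d:ℝ) + 1) * ‖(x - z) - (y - z)‖ / (ρ / 2) ^ d :=
      kdiff d (by omega) sgn hsgn (x - z) (y - z) hxz0 hyz0 hm0 hxz hyz
    rw [hsub] at hbd
    refine hbd.trans (le_of_eq ?_)
    rw [hM_def, div_pow, hρd]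
    field_simp
    ring
  -- integrate
  have hmeas : MeasurableSet (Metric.ball A ρ)ᶜ := measurableSet_ball.compl
  calc ∫⁻ z in (Metric.ball A ρ)ᶜ,
        (‖Kker d sgn (x - z) - Kker d sgn (y - z)‖₊ : ℝ≥0∞) * ENNReal.ofReal |g z|
      ≤ ∫⁻ z in (Metric.ball A ρ)ᶜ, ENNReal.ofReal M * ENNReal.ofReal |g z| := by
        apply setLIntegral_mono' hmeas
        intro z hz
        apply mul_le_mul_left
        rw [← enorm_eq_nnnorm, ← ofReal_norm]
        exact ENNReal.ofReal_le_ofReal (hpt z hz)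
    _ ≤ ∫⁻ z, ENNReal.ofReal M * ENNReal.ofReal |g z| := setLIntegral_le_lintegral _ _
    _ = ENNReal.ofReal M * ∫⁻ z, ENNReal.ofReal |g z| :=
        lintegral_const_mul' _ _ ENNReal.ofReal_ne_top
    _ = ENNReal.ofReal M * ENNReal.ofReal (∫ z, |g z|) := by
        rw [← ofReal_integral_eq_lintegral_ofReal hg.abs
          (Filter.Eventually.of_forall fun z => abs_nonneg _)]
    _ = ENNReal.ofReal (M * ∫ z, |g z|) := (ENNReal.ofReal_mul hM0).symm
    _ ≤ ENNReal.ofReal ((((d:ℝ) + 1) * 2 ^ d) * (∫ z, |g z|) * R * P) := by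
        apply ENNReal.ofReal_le_ofReal
        rw [hM_def]; ring_nf; exact le_refl _
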